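/- For any W ∈ (0,2], partitioning [-1,1] into K_W = ⌈2/W⌉ bins of length at most W and letting g_W(X) = E[u_Y | bin index of v_u(X)], the predictor g_W is perfectly calibrated (E[u_Y | g_W(X)] = g_W(X) a.s.) and satisfies E|g_W(X) - v_u(X)| ≤ (2/W + 1)·UC(f,u) + W. -/

import Mathlib

open MeasureTheory Set Filter

section
variable {Ω : Type*} [MeasurableSpace Ω] (μ : Measure Ω) [IsProbabilityMeasure μ]
    (uY v : Ω → ℝ)

lemma aux_integrable
    (huY : ∀ ω, uY ω ∈ Icc (-1 : ℝ) 1) (hv : ∀ ω, v ω ∈ Icc (-1 : ℝ) 1)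
    (hmuY : Measurable uY) (hmv : Measurable v)
    (S : Set ℝ) (hS : MeasurableSet S) :
    Integrable (fun ω => (uY ω - v ω) * S.indicator (fun _ => (1 : ℝ)) (v ω)) μ := by
  refine Integrable.mono' (integrable_const (2 : ℝ))
    (((hmuY.sub hmv).mul ((measurable_const.indicator hS).comp hmv)).aestronglyMeasurable)
    (ae_of_all _ fun ω => ?_)
  have h1 : |uY ω - v ω| ≤ 2 := by
    have h2 := huY ω; have h3 := hv ω
    simp only [mem_Icc] at h2 h3
    rw [abs_le]; constructor <;> linarith
  have h2 : |S.indicator (fun _ => (1 : ℝ)) (v ω)| ≤ 1 := by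
    by_cases h : v ω ∈ S <;> simp [indicator_of_mem, indicator_of_notMem, h]
  calc ‖(uY ω - v ω) * S.indicator (fun _ => (1 : ℝ)) (v ω)‖
      = |uY ω - v ω| * |S.indicator (fun _ => (1 : ℝ)) (v ω)| := by
        rw [Real.norm_eq_abs, abs_mul]
    _ ≤ 2 * 1 := mul_le_mul h1 h2 (abs_nonneg _) (by norm_num)
    _ = 2 := by norm_num

lemma aux_bdd
    (huY : ∀ ω, uY ω ∈ Icc (-1 : ℝ) 1) (hv : ∀ ω, v ω ∈ Icc (-1 : ℝ) 1) :
    BddAbove (range fun I : {q : ℝ × ℝ // -1 ≤ q.1 ∧ q.1 ≤ q.2 ∧ q.2 ≤ 1} =>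
      |∫ ω, (uY ω - v ω) * (Icc I.1.1 I.1.2).indicator (fun _ => (1 : ℝ)) (v ω) ∂μ|) := by
  refine ⟨2, fun x hx => ?_⟩
  obtain ⟨I, rfl⟩ := hx
  calc |∫ ω, (uY ω - v ω) * (Icc I.1.1 I.1.2).indicator (fun _ => (1 : ℝ)) (v ω) ∂μ|
      ≤ ∫ ω, ‖(uY ω - v ω) * (Icc I.1.1 I.1.2).indicator (fun _ => (1 : ℝ)) (v ω)‖ ∂μ :=
        by rw [← Real.norm_eq_abs]; exact norm_integral_le_integral_norm _
    _ ≤ ∫ _ω, (2 : ℝ) ∂μ := by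
        refine integral_mono_of_nonneg (ae_of_all _ fun ω => norm_nonneg _)
          (integrable_const 2) (ae_of_all _ fun ω => ?_)
        have h1 : |uY ω - v ω| ≤ 2 := by
          have h2 := huY ω; have h3 := hv ω
          simp only [mem_Icc] at h2 h3
          rw [abs_le]; constructor <;> linarith
        have h2 : |(Icc I.1.1 I.1.2).indicator (fun _ => (1 : ℝ)) (v ω)| ≤ 1 := by
          by_cases h : v ω ∈ Icc I.1.1 I.1.2 <;> simp [indicator_of_mem, indicator_of_notMem, h]
        calc ‖(uY ω - v ω) * (Icc I.1.1 I.1.2).indicator (fun _ => (1 : ℝ)) (v ω)‖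
            = |uY ω - v ω| * |(Icc I.1.1 I.1.2).indicator (fun _ => (1 : ℝ)) (v ω)| := by
              rw [Real.norm_eq_abs, abs_mul]
          _ ≤ 2 * 1 := mul_le_mul h1 h2 (abs_nonneg _) (by norm_num)
          _ = 2 := by norm_num
    _ = 2 := by simp

lemma aux_UC_nonneg
    (huY : ∀ ω, uY ω ∈ Icc (-1 : ℝ) 1) (hv : ∀ ω, v ω ∈ Icc (-1 : ℝ) 1) :
    (0 : ℝ) ≤ ⨆ I : {q : ℝ × ℝ // -1 ≤ q.1 ∧ q.1 ≤ q.2 ∧ q.2 ≤ 1},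
      |∫ ω, (uY ω - v ω) * (Icc I.1.1 I.1.2).indicator (fun _ => (1 : ℝ)) (v ω) ∂μ| :=
  le_trans (abs_nonneg _) (le_ciSup (aux_bdd μ uY v huY hv)
    ⟨((-1 : ℝ), (-1 : ℝ)), le_refl _, le_refl _, by norm_num⟩)

lemma aux_UC
    (huY : ∀ ω, uY ω ∈ Icc (-1 : ℝ) 1) (hv : ∀ ω, v ω ∈ Icc (-1 : ℝ) 1)
    (hmuY : Measurable uY) (hmv : Measurable v)
    (A : Set ℝ) (hAsub : A ⊆ Icc (-1 : ℝ) 1) (hAoc : A.OrdConnected) :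
    |∫ ω, (uY ω - v ω) * A.indicator (fun _ => (1 : ℝ)) (v ω) ∂μ| ≤
      ⨆ I : {q : ℝ × ℝ // -1 ≤ q.1 ∧ q.1 ≤ q.2 ∧ q.2 ≤ 1},
        |∫ ω, (uY ω - v ω) * (Icc I.1.1 I.1.2).indicator (fun _ => (1 : ℝ)) (v ω) ∂μ| := by
  classical
  set UC := ⨆ I : {q : ℝ × ℝ // -1 ≤ q.1 ∧ q.1 ≤ q.2 ∧ q.2 ≤ 1},
        |∫ ω, (uY ω - v ω) * (Icc I.1.1 I.1.2).indicator (fun _ => (1 : ℝ)) (v ω) ∂μ| with hUC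
  have hle : ∀ a b : ℝ, -1 ≤ a → a ≤ b → b ≤ 1 →
      |∫ ω, (uY ω - v ω) * (Icc a b).indicator (fun _ => (1 : ℝ)) (v ω) ∂μ| ≤ UC :=
    fun a b h1 h2 h3 => le_ciSup (aux_bdd μ uY v huY hv) ⟨(a, b), h1, h2, h3⟩
  rcases A.eq_empty_or_nonempty with rfl | hne
  · simpa using aux_UC_nonneg μ uY v huY hv
  · have hbdb : BddBelow A := ⟨-1, fun x hx => (hAsub hx).1⟩
    have hbda : BddAbove A := ⟨1, fun x hx => (hAsub hx).2⟩
    set a := sInf A with ha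
    set b := sSup A with hb
    have ha1 : -1 ≤ a := le_csInf hne fun x hx => (hAsub hx).1
    have hb1 : b ≤ 1 := csSup_le hne fun x hx => (hAsub hx).2
    have hab : a ≤ b := csInf_le_csSup hne hbdb hbda
    have hAIcc : A ⊆ Icc a b := fun x hx => ⟨csInf_le hbdb hx, le_csSup hbda hx⟩
    have hIoo : Ioo a b ⊆ A := by
      rintro x ⟨hx1, hx2⟩
      obtain ⟨y, hy, hyx⟩ := (csInf_lt_iff hbdb hne).mp hx1
      obtain ⟨z, hz, hxz⟩ := (lt_csSup_iff hbda hne).mp hx2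
      exact hAoc.out hy hz ⟨hyx.le, hxz.le⟩
    rcases eq_or_lt_of_le hab with heq | hlt
    · -- a = b : A = {a} = Icc a b
      have hA_eq : A = Icc a b := by
        refine Subset.antisymm hAIcc fun x hx => ?_
        obtain ⟨y, hy⟩ := hne
        have hxy : x = y := by
          have h1 := hAIcc hy
          rw [← heq] at hx h1
          simp only [Icc_self, mem_singleton_iff] at hx h1
          rw [hx, h1]
        rwa [hxy]
      rw [hA_eq]; exact hle a b ha1 hab hb1
    · -- a < b : approximation by closed intervals
      set d : ℕ → ℝ := fun n => (b - a) / (n + 1) with hd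
      have hd_pos : ∀ n, 0 < d n := fun n => by
        apply div_pos (by linarith) (by positivity)
      have hd_to : Tendsto d atTop (nhds 0) := by
        have := tendsto_one_div_add_atTop_nhds_zero_nat.const_mul (b - a)
        simpa [hd, div_eq_mul_inv, mul_comm] using this
      set an : ℕ → ℝ := fun n => if a ∈ A then a else a + d n with han
      set bn : ℕ → ℝ := fun n => if b ∈ A then b else b - d n with hbn
      have han_ge : ∀ n, a ≤ an n := fun n => by
        simp only [han]; split_ifs
        · exact le_refl a
        · linarith [hd_pos n]
      have hbn_le : ∀ n, bn n ≤ b := fun n => by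
        simp only [hbn]; split_ifs
        · exact le_refl b
        · linarith [hd_pos n]
      have hd_half : ∀ n, 1 ≤ n → d n ≤ (b - a) / 2 := fun n hn => by
        simp only [hd]
        apply div_le_div_of_nonneg_left (by linarith) (by norm_num)
        have : (1 : ℝ) ≤ (n : ℝ) := by exact_mod_cast hn
        linarith
      have hanbn : ∀ n, 1 ≤ n → an n ≤ bn n := fun n hn => by
        have h1 := hd_half n hn
        have h2 := hd_pos n
        simp only [han, hbn]; split_ifs <;> linarith
      -- pointwise convergence of indicators
      have hptw : ∀ x : ℝ, ∀ᶠ n in atTop,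
          (Icc (an n) (bn n)).indicator (fun _ => (1 : ℝ)) x
            = A.indicator (fun _ => (1 : ℝ)) x := by
        intro x
        have key : ∀ᶠ n in atTop, (x ∈ Icc (an n) (bn n) ↔ x ∈ A) := by
          by_cases hx : x ∈ A
          · have hax : a ≤ x := (hAIcc hx).1
            have hxb : x ≤ b := (hAIcc hx).2
            have hlow : ∀ᶠ n in atTop, an n ≤ x := by
              by_cases haA : a ∈ A
              · exact Eventually.of_forall fun n => by simp only [han, if_pos haA]; exact hax
              · have hax' : a < x :=
                  lt_of_le_of_ne hax fun h => haA (h ▸ hx)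
                filter_upwards [hd_to.eventually_lt_const (show (0:ℝ) < x - a by linarith)]
                  with n hn
                simp only [han, if_neg haA]; linarith
            have hupp : ∀ᶠ n in atTop, x ≤ bn n := by
              by_cases hbA : b ∈ A
              · exact Eventually.of_forall fun n => by simp only [hbn, if_pos hbA]; exact hxb
              · have hxb' : x < b :=
                  lt_of_le_of_ne hxb fun h => hbA (h ▸ hx)
                filter_upwards [hd_to.eventually_lt_const (show (0:ℝ) < b - x by linarith)]
                  with n hn
                simp only [hbn, if_neg hbA]; linarith
            filter_upwards [hlow, hupp] with n h1 h2
            simp [mem_Icc, h1, h2, hx]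
          · refine Eventually.of_forall fun n => ?_
            simp only [hx, iff_false, mem_Icc, not_and_or, not_le]
            rcases lt_or_ge x a with h | h
            · left; exact lt_of_lt_of_le h (han_ge n)
            rcases lt_or_ge b x with h' | h'
            · right; exact lt_of_le_of_lt (hbn_le n) h'
            -- a ≤ x ≤ b, x ∉ A : x = a or x = b
            rcases eq_or_lt_of_le h with rfl | hax
            · -- x = a, a ∉ A
              left; simp only [han, if_neg hx]; linarith [hd_pos n]
            rcases eq_or_lt_of_le h' with rfl | hxb
            · right; simp only [hbn, if_neg hx]; linarith [hd_pos n]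
            · exact absurd (hIoo ⟨hax, hxb⟩) hx
        filter_upwards [key] with n hn
        simp only [indicator]
        rw [if_congr hn rfl rfl]
      -- dominated convergence
      have htend : Tendsto
          (fun n => ∫ ω, (uY ω - v ω) * (Icc (an n) (bn n)).indicator (fun _ => (1:ℝ)) (v ω) ∂μ)
          atTop (nhds (∫ ω, (uY ω - v ω) * A.indicator (fun _ => (1:ℝ)) (v ω) ∂μ)) := by
        refine tendsto_integral_of_dominated_convergence (fun _ => (2:ℝ))
          (fun n => (((hmuY.sub hmv).mul
            ((measurable_const.indicator measurableSet_Icc).comp hmv)).aestronglyMeasurable))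
          (integrable_const 2) (fun n => ae_of_all _ fun ω => ?_) (ae_of_all _ fun ω => ?_)
        · have h1 : |uY ω - v ω| ≤ 2 := by
            have h2 := huY ω; have h3 := hv ω
            simp only [mem_Icc] at h2 h3
            rw [abs_le]; constructor <;> linarith
          have h2 : |(Icc (an n) (bn n)).indicator (fun _ => (1 : ℝ)) (v ω)| ≤ 1 := by
            by_cases h : v ω ∈ Icc (an n) (bn n) <;>
              simp [indicator_of_mem, indicator_of_notMem, h]
          calc ‖(uY ω - v ω) * (Icc (an n) (bn n)).indicator (fun _ => (1 : ℝ)) (v ω)‖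
              = |uY ω - v ω| * |(Icc (an n) (bn n)).indicator (fun _ => (1 : ℝ)) (v ω)| := by
                rw [Real.norm_eq_abs, abs_mul]
            _ ≤ 2 * 1 := mul_le_mul h1 h2 (abs_nonneg _) (by norm_num)
            _ = 2 := by norm_num
        · refine Tendsto.congr' ?_ tendsto_const_nhds
          filter_upwards [hptw (v ω)] with n hn
          rw [hn]
      have habs : Tendsto
          (fun n => |∫ ω, (uY ω - v ω) * (Icc (an n) (bn n)).indicator (fun _ => (1:ℝ)) (v ω) ∂μ|)
          atTop (nhds (|∫ ω, (uY ω - v ω) * A.indicator (fun _ => (1:ℝ)) (v ω) ∂μ|)) :=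
        htend.abs
      refine le_of_tendsto habs ?_
      filter_upwards [eventually_ge_atTop 1] with n hn
      exact hle (an n) (bn n) (le_trans ha1 (han_ge n)) (hanbn n hn)
        (le_trans (hbn_le n) hb1)

end


/-- binning the predicted utility `v` into `K = ⌈2/W⌉` interval-bins of length
at most `W` and taking the conditional expectation of the realized utility `uY` given the bin
index yields a perfectly calibrated predictor `g` with `E|g - v| ≤ (2/W + 1)·UC + W`. -/
theorem stmt_2 {Ω : Type*} [MeasurableSpace Ω] (μ : Measure Ω) [IsProbabilityMeasure μ]
    (uY v : Ω → ℝ)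
    (huY : ∀ ω, uY ω ∈ Icc (-1 : ℝ) 1) (hv : ∀ ω, v ω ∈ Icc (-1 : ℝ) 1)
    (hmuY : Measurable uY) (hmv : Measurable v)
    (UC : ℝ)
    (hUC : UC = ⨆ I : {q : ℝ × ℝ // -1 ≤ q.1 ∧ q.1 ≤ q.2 ∧ q.2 ≤ 1},
      |∫ ω, (uY ω - v ω) * (Icc I.1.1 I.1.2).indicator (fun _ => (1 : ℝ)) (v ω) ∂μ|)
    (W : ℝ) (hW : W ∈ Ioc (0 : ℝ) 2)
    (K : ℕ) (hK : (K : ℝ) = ⌈2 / W⌉)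
    (A : Fin K → Set ℝ)
    (hAsub : ∀ j, A j ⊆ Icc (-1 : ℝ) 1)
    (hAint : ∀ j, (A j).OrdConnected)
    (hAmeas : ∀ j, MeasurableSet (A j))
    (hAlen : ∀ j, ∀ x ∈ A j, ∀ y ∈ A j, |x - y| ≤ W)
    (hAdisj : Pairwise (Function.onFun Disjoint A))
    (hAcover : (⋃ j, A j) = Icc (-1 : ℝ) 1)
    (ψ : ℝ → Fin K) (hψ : ∀ z ∈ Icc (-1 : ℝ) 1, z ∈ A (ψ z))
    (g : Ω → ℝ)
    (hg : g = μ[uY | MeasurableSpace.comap (fun ω => ψ (v ω)) (⊤ : MeasurableSpace (Fin K))]) :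
    (μ[uY | MeasurableSpace.comap g (by infer_instance)] =ᵐ[μ] g) ∧
    ∫ ω, |g ω - v ω| ∂μ ≤ (2 / W + 1) * UC + W := by
  classical
  obtain ⟨hW0, hW2⟩ := hW
  set S : Fin K → Set Ω := fun j => v ⁻¹' (A j) with hS_def
  have hψv : ∀ ω, v ω ∈ A (ψ (v ω)) := fun ω => hψ _ (hv ω)
  have hS_eq : ∀ (j : Fin K) ω, v ω ∈ A j ↔ ψ (v ω) = j := by
    intro j ω
    constructor
    · intro h
      by_contra hne
      exact Set.disjoint_left.mp (hAdisj (Ne.symm hne)) h (hψv ω)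
    · intro h; exact h ▸ hψv ω
  have hSmeas : ∀ j, MeasurableSet (S j) := fun j => hmv (hAmeas j)
  have hpre : ∀ j : Fin K, (fun ω => ψ (v ω)) ⁻¹' {j} = S j := by
    intro j; ext ω
    simp only [mem_preimage, mem_singleton_iff, hS_def, hS_eq]
  have hmeasψv : @Measurable Ω (Fin K) _ ⊤ (fun ω => ψ (v ω)) := by
    refine @measurable_to_countable (Fin K) Ω ⊤ _ _ _ fun ω => ?_
    rw [hpre]
    exact hSmeas _
  have hm : MeasurableSpace.comap (fun ω => ψ (v ω)) (⊤ : MeasurableSpace (Fin K))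
      ≤ (inferInstance : MeasurableSpace Ω) := measurable_iff_comap_le.mp hmeasψv
  haveI : SigmaFinite (μ.trim hm) := by
    haveI := isFiniteMeasure_trim hm (μ := μ)
    infer_instance
  -- basic integrability
  have hintuY : Integrable uY μ := by
    refine Integrable.mono' (integrable_const (1 : ℝ)) hmuY.aestronglyMeasurable
      (ae_of_all _ fun ω => ?_)
    have := huY ω; simp only [mem_Icc] at this
    rw [Real.norm_eq_abs, abs_le]; exact this
  have hintv : Integrable v μ := by
    refine Integrable.mono' (integrable_const (1 : ℝ)) hmv.aestronglyMeasurable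
      (ae_of_all _ fun ω => ?_)
    have := hv ω; simp only [mem_Icc] at this
    rw [Real.norm_eq_abs, abs_le]; exact this
  -- the explicit conditional expectation
  set c : Fin K → ℝ := fun j =>
    if μ (S j) = 0 then 0 else (∫ ω in S j, uY ω ∂μ) / (μ (S j)).toReal with hc_def
  set h : Ω → ℝ := fun ω => c (ψ (v ω)) with hh_def
  have habs_setint : ∀ (j : Fin K) (f : Ω → ℝ), Integrable f μ → (∀ ω, |f ω| ≤ 1) →
      |∫ ω in S j, f ω ∂μ| ≤ (μ (S j)).toReal := by
    intro j f hf hf1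
    calc |∫ ω in S j, f ω ∂μ| ≤ ∫ ω in S j, (1:ℝ) ∂μ := by
          rw [← Real.norm_eq_abs]
          refine (norm_integral_le_integral_norm _).trans ?_
          refine setIntegral_mono_on hf.abs.integrableOn
            (integrable_const _).integrableOn (hSmeas j) fun ω _ => ?_
          exact hf1 ω
      _ = (μ (S j)).toReal := by simp [measureReal_def]
  have hc_bound : ∀ j, |c j| ≤ 1 := by
    intro j
    simp only [hc_def]
    split_ifs with h0
    · norm_num
    · have hP : 0 < (μ (S j)).toReal := ENNReal.toReal_pos h0 (measure_ne_top μ _)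
      rw [abs_div, abs_of_pos hP, div_le_one hP]
      exact habs_setint j uY hintuY fun ω => by
        have := huY ω; simp only [mem_Icc] at this; rw [abs_le]; exact this
  have hint_h : Integrable h μ := by
    refine Integrable.mono' (integrable_const (1 : ℝ))
      ((measurable_from_top.comp' hmeasψv).aestronglyMeasurable)
      (ae_of_all _ fun ω => ?_)
    rw [Real.norm_eq_abs]; exact hc_bound _
  have hωj : ∀ (j : Fin K) ω, ω ∈ S j → h ω = c j := by
    intro j ω hω
    simp only [hh_def]
    rw [(hS_eq j ω).mp hω]
  have hSint : ∀ j : Fin K, ∫ ω in S j, h ω ∂μ = ∫ ω in S j, uY ω ∂μ := by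
    intro j
    by_cases h0 : μ (S j) = 0
    · rw [Measure.restrict_eq_zero.mpr h0]
      simp
    · rw [setIntegral_congr_fun (hSmeas j) (fun ω hω => hωj j ω hω), setIntegral_const,
        smul_eq_mul]
      simp only [hc_def, if_neg h0]
      rw [measureReal_def, mul_div_cancel₀]
      exact ENNReal.toReal_ne_zero.mpr ⟨h0, measure_ne_top μ _⟩
  have hge : h =ᵐ[μ] μ[uY | MeasurableSpace.comap (fun ω => ψ (v ω))
      (⊤ : MeasurableSpace (Fin K))] := by
    refine ae_eq_condExp_of_forall_setIntegral_eq hm hintuY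
      (fun s _ _ => hint_h.integrableOn) (fun s hs _ => ?_) ?_
    · obtain ⟨t, -, rfl⟩ := hs
      have hT_eq : ∀ j : Fin K, (fun ω => ψ (v ω)) ⁻¹' ({j} ∩ t)
          = if j ∈ t then S j else ∅ := by
        intro j
        split_ifs with hj
        · rw [inter_eq_self_of_subset_left (by simpa using hj), hpre]
        · rw [(by simpa using hj : ({j} : Set (Fin K)) ∩ t = (∅ : Set (Fin K)))]; simp
      have hTmeas : ∀ j : Fin K,
          MeasurableSet ((fun ω => ψ (v ω)) ⁻¹' ({j} ∩ t)) := by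
        intro j; rw [hT_eq]; split_ifs
        · exact hSmeas _
        · exact MeasurableSet.empty
      have hTdisj : Pairwise (Function.onFun Disjoint fun j : Fin K =>
          (fun ω => ψ (v ω)) ⁻¹' ({j} ∩ t)) := by
        intro i j hij
        refine Disjoint.preimage _ (Set.disjoint_left.mpr ?_)
        rintro x ⟨hx1, -⟩ ⟨hx2, -⟩
        simp only [mem_singleton_iff] at hx1 hx2
        exact hij (hx1 ▸ hx2 ▸ rfl)
      have hTunion : (⋃ j : Fin K, (fun ω => ψ (v ω)) ⁻¹' ({j} ∩ t))
          = (fun ω => ψ (v ω)) ⁻¹' t := by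
        rw [← preimage_iUnion]
        congr 1
        ext j
        simp
      have hdecomp : ∀ (f : Ω → ℝ), Integrable f μ →
          ∫ ω in (fun ω => ψ (v ω)) ⁻¹' t, f ω ∂μ
            = ∑ j : Fin K, ∫ ω in (fun ω => ψ (v ω)) ⁻¹' ({j} ∩ t), f ω ∂μ := by
        intro f hf
        rw [← tsum_fintype (L := .unconditional _), ← integral_iUnion hTmeas hTdisj
          (hf.integrableOn : IntegrableOn f _ μ), hTunion]
      rw [hdecomp h hint_h, hdecomp uY hintuY]
      refine Finset.sum_congr rfl fun j _ => ?_
      rw [hT_eq]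
      split_ifs
      · exact hSint j
      · simp
    · exact ((measurable_from_top.comp'
        (measurable_iff_comap_le.mpr le_rfl)).stronglyMeasurable).aestronglyMeasurable
  -- Part 1: calibration
  subst hg
  have hmg_le_m : MeasurableSpace.comap
        (μ[uY | MeasurableSpace.comap (fun ω => ψ (v ω)) (⊤ : MeasurableSpace (Fin K))])
        (inferInstance : MeasurableSpace ℝ)
      ≤ MeasurableSpace.comap (fun ω => ψ (v ω)) (⊤ : MeasurableSpace (Fin K)) :=
    measurable_iff_comap_le.mp stronglyMeasurable_condExp.measurable
  have hmg_le : MeasurableSpace.comap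
        (μ[uY | MeasurableSpace.comap (fun ω => ψ (v ω)) (⊤ : MeasurableSpace (Fin K))])
        (inferInstance : MeasurableSpace ℝ)
      ≤ (inferInstance : MeasurableSpace Ω) := hmg_le_m.trans hm
  haveI : SigmaFinite (μ.trim hmg_le) := by
    haveI := isFiniteMeasure_trim hmg_le (μ := μ)
    infer_instance
  constructor
  · have h1 := condExp_condExp_of_le hmg_le_m hm (μ := μ) (f := uY)
    have h2 : μ[μ[uY | MeasurableSpace.comap (fun ω => ψ (v ω))
            (⊤ : MeasurableSpace (Fin K))] |
          MeasurableSpace.comap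
            (μ[uY | MeasurableSpace.comap (fun ω => ψ (v ω)) (⊤ : MeasurableSpace (Fin K))])
            (inferInstance : MeasurableSpace ℝ)]
        = μ[uY | MeasurableSpace.comap (fun ω => ψ (v ω)) (⊤ : MeasurableSpace (Fin K))] :=
      condExp_of_stronglyMeasurable hmg_le
        ((measurable_iff_comap_le.mpr le_rfl).stronglyMeasurable) integrable_condExp
    exact h1.symm.trans (Filter.EventuallyEq.of_eq h2)
  -- Part 2: the distance bound
  · have hcover : (⋃ j, S j) = Set.univ := by
      ext ω
      simp only [mem_iUnion, mem_univ, iff_true, hS_def, mem_preimage]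
      exact ⟨ψ (v ω), hψv ω⟩
    have hSdisj : Pairwise (Function.onFun Disjoint S) := fun i j hij => (hAdisj hij).preimage v
    have hUC0 : 0 ≤ UC := hUC ▸ aux_UC_nonneg μ uY v huY hv
    have hint_abs : Integrable (fun ω => |h ω - v ω|) μ := (hint_h.sub hintv).abs
    have key : ∀ j, ∫ ω in S j, |h ω - v ω| ∂μ ≤ UC + W * (μ (S j)).toReal := by
      intro j
      by_cases h0 : μ (S j) = 0
      · rw [Measure.restrict_eq_zero.mpr h0]
        simp only [integral_zero_measure]
        exact add_nonneg hUC0 (mul_nonneg hW0.le ENNReal.toReal_nonneg)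
      · have hP : 0 < (μ (S j)).toReal := ENNReal.toReal_pos h0 (measure_ne_top μ _)
        set P := (μ (S j)).toReal with hP_def
        set mj := (∫ ω in S j, v ω ∂μ) / P with hmj_def
        have hcj : c j = (∫ ω in S j, uY ω ∂μ) / P := by
          simp only [hc_def, if_neg h0, hP_def]
        have hvmem : ∀ ω ∈ S j, v ω ∈ A j := fun ω hω => hω
        have hmj_bound : ∀ ω ∈ S j, |mj - v ω| ≤ W := by
          intro ω0 hω0
          have hlow : (v ω0 - W) * P ≤ ∫ ω in S j, v ω ∂μ := by
            calc (v ω0 - W) * P = ∫ _ω in S j, (v ω0 - W) ∂μ := by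
                  rw [setIntegral_const, smul_eq_mul, mul_comm, measureReal_def]
              _ ≤ ∫ ω in S j, v ω ∂μ := by
                  refine setIntegral_mono_on (integrable_const _).integrableOn
                    hintv.integrableOn (hSmeas j) fun ω hω => ?_
                  have := abs_le.mp (hAlen j (v ω) (hvmem ω hω) (v ω0) (hvmem ω0 hω0))
                  linarith [this.1]
          have hupp : ∫ ω in S j, v ω ∂μ ≤ (v ω0 + W) * P := by
            calc ∫ ω in S j, v ω ∂μ ≤ ∫ _ω in S j, (v ω0 + W) ∂μ := by
                  refine setIntegral_mono_on hintv.integrableOn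
                    (integrable_const _).integrableOn (hSmeas j) fun ω hω => ?_
                  have := abs_le.mp (hAlen j (v ω) (hvmem ω hω) (v ω0) (hvmem ω0 hω0))
                  linarith [this.2]
              _ = (v ω0 + W) * P := by rw [setIntegral_const, smul_eq_mul, mul_comm, measureReal_def]
          rw [abs_le]
          constructor
          · have : (v ω0 - W) ≤ mj := (le_div_iff₀ hP).mpr hlow
            linarith
          · have : mj ≤ (v ω0 + W) := (div_le_iff₀ hP).mpr hupp
            linarith
        have step : ∫ ω in S j, |h ω - v ω| ∂μ ≤ (|c j - mj| + W) * P := by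
          calc ∫ ω in S j, |h ω - v ω| ∂μ ≤ ∫ _ω in S j, (|c j - mj| + W) ∂μ := by
                refine setIntegral_mono_on hint_abs.integrableOn
                  (integrable_const _).integrableOn (hSmeas j) fun ω hω => ?_
                rw [hωj j ω hω]
                calc |c j - v ω| ≤ |c j - mj| + |mj - v ω| := abs_sub_le _ _ _
                  _ ≤ |c j - mj| + W := by linarith [hmj_bound ω hω]
            _ = (|c j - mj| + W) * P := by rw [setIntegral_const, smul_eq_mul, mul_comm, measureReal_def]
        have hkey2 : |c j - mj| * P ≤ UC := by
          have e3 : |c j - mj| * P = |∫ ω in S j, (uY ω - v ω) ∂μ| := by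
            rw [integral_sub hintuY.integrableOn hintv.integrableOn, hcj, hmj_def,
              div_sub_div_same, abs_div, abs_of_pos hP, div_mul_cancel₀ _ hP.ne']
          have e4 : ∫ ω in S j, (uY ω - v ω) ∂μ
              = ∫ ω, (uY ω - v ω) * (A j).indicator (fun _ => (1 : ℝ)) (v ω) ∂μ := by
            rw [← integral_indicator (hSmeas j)]
            congr 1
            funext ω
            by_cases hA : v ω ∈ A j
            · rw [indicator_of_mem (by exact hA : ω ∈ S j), indicator_of_mem hA, mul_one]
            · rw [indicator_of_notMem (by exact hA : ω ∉ S j), indicator_of_notMem hA,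
                mul_zero]
          rw [e3, e4, hUC]
          exact aux_UC μ uY v huY hv hmuY hmv (A j) (hAsub j) (hAint j)
        calc ∫ ω in S j, |h ω - v ω| ∂μ ≤ (|c j - mj| + W) * P := step
          _ = |c j - mj| * P + W * P := by ring
          _ ≤ UC + W * P := by linarith
    have hsum1 : ∑ j : Fin K, (μ (S j)).toReal = 1 := by
      rw [← ENNReal.toReal_sum (fun j _ => measure_ne_top μ _), ← tsum_fintype (L := .unconditional _),
        ← measure_iUnion hSdisj hSmeas, hcover, measure_univ, ENNReal.toReal_one]
    have e1 : ∫ ω, |(μ[uY | MeasurableSpace.comap (fun ω => ψ (v ω))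
          (⊤ : MeasurableSpace (Fin K))]) ω - v ω| ∂μ = ∫ ω, |h ω - v ω| ∂μ := by
      refine integral_congr_ae ?_
      filter_upwards [hge] with ω hω
      rw [← hω]
    have e2 : ∫ ω, |h ω - v ω| ∂μ = ∑ j : Fin K, ∫ ω in S j, |h ω - v ω| ∂μ := by
      rw [← setIntegral_univ, ← hcover,
        integral_iUnion hSmeas hSdisj hint_abs.integrableOn, tsum_fintype]
    have hKle : (K : ℝ) ≤ 2 / W + 1 := by
      rw [hK]
      exact (Int.ceil_lt_add_one _).le
    refine le_trans (le_of_eq (e1.trans e2)) ?_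
    calc ∑ j : Fin K, ∫ ω in S j, |h ω - v ω| ∂μ
        ≤ ∑ j : Fin K, (UC + W * (μ (S j)).toReal) :=
          Finset.sum_le_sum fun j _ => key j
      _ = (K : ℝ) * UC + W * ∑ j : Fin K, (μ (S j)).toReal := by
          rw [Finset.sum_add_distrib, Finset.sum_const, Finset.card_univ, Fintype.card_fin,
            nsmul_eq_mul, ← Finset.mul_sum]
      _ = (K : ℝ) * UC + W := by rw [hsum1, mul_one]
      _ ≤ (2 / W + 1) * UC + W := by
          have := mul_le_mul_of_nonneg_right hKle hUC0
          linarith
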